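/- Closed form of the activating volume on the third branch: let t ∈ [0,1], s = √(1 − t²), v ∈ [0,1] and c ∈ ℝ. If v·Δμ·s > d₃(v)·t and f^HS(t;v) = c, then c ≠ −κ⁺·(1 − 2t²) and v = ((κ⁺ + μ⁺)/Δμ) · (1 − (1 − t²)·(κ⁺ + μ⁻) / (c + κ⁺·(1 − 2t²))). -/

import Mathlib

open Real

/-- The square root `s = √(1 - t²)`. -/
noncomputable def sHS (t : ℝ) : ℝ := Real.sqrt (1 - t ^ 2)

/-- The Hashin–Shtrikman correction term `q(t; v)` for two well-ordered isotropic
plane-stress phases with bulk moduli `κm < κp` and shear moduli `μm < μp`. -/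
noncomputable def qHS (κm κp μm μp t v : ℝ) : ℝ :=
  if v * (κp - κm) * t ≤ (κp + μp - (κp - κm) * v) * sHS t ∧
     v * (μp - μm) * sHS t ≤ (κp + μp - (μp - μm) * v) * t then
    v * (1 - v) * ((κp - κm) * t - (μp - μm) * sHS t) ^ 2 /
      (κp + μp - ((κp - κm) + (μp - μm)) * v)
  else if (κp + μp - (κp - κm) * v) * sHS t < v * (κp - κm) * t then
    (1 - v) * (v * (κp - κm) ^ 2 * t ^ 2 / (κp + μp - (κp - κm) * v)
      - (μp - μm) * (sHS t) ^ 2)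
  else
    (1 - v) * (v * (μp - μm) ^ 2 * (sHS t) ^ 2 / (κp + μp - (μp - μm) * v)
      - (κp - κm) * t ^ 2)

/-- The Hashin–Shtrikman upper-bound function `f^HS(t; v)`:
the Voigt energy minus the correction `q(t; v)`. -/
noncomputable def fHS (κm κp μm μp t v : ℝ) : ℝ :=
  (κm + v * (κp - κm)) * t ^ 2 + (μm + v * (μp - μm)) * (1 - t ^ 2)
    - qHS κm κp μm μp t v

/-- Closed form of the activating volume on the third branch: if
`v·Δμ·s > d₃(v)·t` and `f^HS(t;v) = c`, then `c ≠ −κ⁺·(1 − 2t²)` and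
`v = ((κ⁺+μ⁺)/Δμ)·(1 − (1 − t²)·(κ⁺+μ⁻)/(c + κ⁺·(1 − 2t²)))`. -/
theorem hs_activating_volume_branch3
    (κm κp μm μp : ℝ) (hκm : 0 < κm) (hκ : κm < κp) (hμm : 0 < μm) (hμ : μm < μp)
    (v : ℝ) (hv : v ∈ Set.Icc (0 : ℝ) 1) (t : ℝ) (ht : t ∈ Set.Icc (0 : ℝ) 1)
    (s : ℝ) (hs : s = Real.sqrt (1 - t ^ 2)) (c : ℝ)
    (hbr : v * (μp - μm) * s > (κp + μp - (μp - μm) * v) * t)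
    (hact : fHS κm κp μm μp t v = c) :
    c ≠ -κp * (1 - 2 * t ^ 2) ∧
    v = ((κp + μp) / (μp - μm)) *
      (1 - (1 - t ^ 2) * (κp + μm) / (c + κp * (1 - 2 * t ^ 2))) := by
  obtain ⟨hv0, hv1⟩ := hv
  obtain ⟨ht0, ht1⟩ := ht
  have hΔκ : 0 < κp - κm := by linarith
  have hΔμ : 0 < μp - μm := by linarith
  have hd3 : 0 < κp + μp - (μp - μm) * v := by nlinarith
  have hd2 : 0 < κp + μp - (κp - κm) * v := by nlinarith
  have hs0 : 0 ≤ s := hs ▸ Real.sqrt_nonneg _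
  have hspos : 0 < s := by nlinarith
  have ht2 : 0 < 1 - t ^ 2 := by
    by_contra h
    push_neg at h
    have : s = 0 := by rw [hs, Real.sqrt_eq_zero']; exact h
    linarith
  have hsq : s ^ 2 = 1 - t ^ 2 := by
    rw [hs, sq_sqrt (by linarith)]
  have hsHS : sHS t = s := hs.symm
  have hprod : v * (κp - κm) * (v * (μp - μm)) ≤
      (κp + μp - (κp - κm) * v) * (κp + μp - (μp - μm) * v) := by
    nlinarith [mul_nonneg (by linarith : (0:ℝ) ≤ κp + μp)
      (by nlinarith : (0:ℝ) ≤ κp + μp - (κp - κm) * v - (μp - μm) * v)]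
  have hkey2 : v * (κp - κm) * t ≤ (κp + μp - (κp - κm) * v) * s := by
    have h1 := mul_le_mul_of_nonneg_left hbr.le (mul_nonneg hv0 hΔκ.le)
    have h2 := mul_le_mul_of_nonneg_right hprod hs0
    nlinarith [h1, h2, hd3, hd2]
  -- q takes the third branch
  have hq : qHS κm κp μm μp t v =
      (1 - v) * (v * (μp - μm) ^ 2 * s ^ 2 / (κp + μp - (μp - μm) * v)
        - (κp - κm) * t ^ 2) := by
    rw [qHS, hsHS]
    rw [if_neg, if_neg]
    · exact not_lt.mpr hkey2
    · rintro ⟨-, h2⟩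
      linarith
  rw [fHS, hq] at hact
  rw [hsq] at hact
  have hd3' : (κp + μp - (μp - μm) * v) ≠ 0 := ne_of_gt hd3
  -- key identity: c + κp (1 - 2t²) = (1-t²)(κp+μm)(κp+μp)/d₃
  have hkey : c + κp * (1 - 2 * t ^ 2)
      = (1 - t ^ 2) * (κp + μm) * (κp + μp) / (κp + μp - (μp - μm) * v) := by
    rw [eq_div_iff hd3', ← hact]
    have e : v * (μp - μm) ^ 2 * (1 - t ^ 2) / (κp + μp - (μp - μm) * v) * (κp + μp - (μp - μm) * v)
        = v * (μp - μm) ^ 2 * (1 - t ^ 2) := div_mul_cancel₀ _ hd3'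
    linear_combination (-(1 - v)) * e
  have hpos : 0 < c + κp * (1 - 2 * t ^ 2) := by
    rw [hkey]
    exact div_pos (mul_pos (mul_pos ht2 (by linarith)) (by linarith)) hd3
  constructor
  · intro h
    rw [h] at hpos
    simp at hpos
  · rw [hkey]
    have hne : (1 - t ^ 2) * (κp + μm) * (κp + μp) ≠ 0 :=
      ne_of_gt (mul_pos (mul_pos ht2 (by linarith)) (by linarith))
    have h1 : κp + μp ≠ 0 := by linarith
    have h2 : κp + μm ≠ 0 := by linarith
    have h3 : μp - μm ≠ 0 := by linarith
    have h4 : 1 - t ^ 2 ≠ 0 := by linarith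
    field_simp
    ring
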